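/- Let S, N, Q, W be four distinct states of a medium with Nτ = S, Wμ = Q, and concise messages q, q', w, w' satisfying Sq = Nq' = Q and Sw' = Nw = W, for tokens τ and μ. Then τ = μ if and only if C(q) = C(w) and ℓ(q) = ℓ(w). -/

import Mathlib

variable {S : Type*}

/-- Result of applying message `m` (a list of tokens) to state `P`. -/
def mApply (m : List (S → S)) (P : S) : S := m.foldl (fun s τ => τ s) P

/-- `τ'` is a reverse of `τ`. -/
def IsReverse (τ τ' : S → S) : Prop := ∀ P Q : S, P ≠ Q → (τ P = Q ↔ τ' Q = P)

/-- `(S, T)` is a token system. -/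
def IsTokenSystem (T : Set (S → S)) : Prop :=
  Nontrivial S ∧ T.Nonempty ∧ ∀ τ ∈ T, τ ≠ id

/-- `m` is a message of the token system with token set `T`. -/
def IsMsg (T : Set (S → S)) (m : List (S → S)) : Prop := ∀ τ ∈ m, τ ∈ T

/-- `m` is stepwise effective for `P`. -/
def StepwiseEff : List (S → S) → S → Prop
  | [], _ => True
  | τ :: rest, P => τ P ≠ P ∧ StepwiseEff rest (τ P)

/-- `m` is consistent: it contains no token together with a reverse of it. -/
def Consistent (m : List (S → S)) : Prop :=
  ∀ τ ∈ m, ∀ τ' ∈ m, ¬ IsReverse τ τ'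

/-- `m` is concise for `P`. -/
def Concise (T : Set (S → S)) (m : List (S → S)) (P : S) : Prop :=
  IsMsg T m ∧ Consistent m ∧ StepwiseEff m P ∧ m.Nodup

/-- `m` is a return message for `P`. -/
def IsReturn (m : List (S → S)) (P : S) : Prop :=
  StepwiseEff m P ∧ mApply m P = P

/-- `m` is vacuous: its indices partition into pairs of mutually reverse tokens. -/
def Vacuous (m : List (S → S)) : Prop :=
  ∃ σ : Equiv.Perm (Fin m.length),
    (∀ i, σ i ≠ i) ∧ (∀ i, σ (σ i) = i) ∧
    ∀ i, IsReverse (m.get i) (m.get (σ i))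

/-- `(S, T)` is a medium: token system satisfying [Ma] and [Mb]. -/
def IsMedium (T : Set (S → S)) : Prop :=
  IsTokenSystem T ∧
  (∀ P Q : S, P ≠ Q → ∃ m, Concise T m P ∧ mApply m P = Q) ∧
  (∀ (m : List (S → S)) (P : S), IsMsg T m → IsReturn m P → Vacuous m)

/-- Content of a message: its set of tokens. -/
def msgContent (m : List (S → S)) : Set (S → S) := {τ | τ ∈ m}

/-- Token content of a state `P`. -/
def SContent (T : Set (S → S)) (P : S) : Set (S → S) :=
  {τ | ∃ (V : S) (m : List (S → S)), Concise T m V ∧ mApply m V = P ∧ τ ∈ m}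

/-- `mr` is the reverse message `τ̃ₙ…τ̃₁` of `m = τ₁…τₙ`. -/
def IsReverseOfMsg (m mr : List (S → S)) : Prop :=
  List.Forall₂ (fun τ τ' => IsReverse τ τ' ∧ IsReverse τ' τ) m mr.reverse

-- infrastructure
lemma mApply_nil (P : S) : mApply [] P = P := rfl
lemma mApply_cons (a : S → S) (m : List (S → S)) (P : S) :
    mApply (a :: m) P = mApply m (a P) := rfl
lemma mApply_append (u v : List (S → S)) (P : S) :
    mApply (u ++ v) P = mApply v (mApply u P) := by
  simp [mApply, List.foldl_append]

lemma stepwiseEff_append {u v : List (S → S)} {P : S} :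
    StepwiseEff (u ++ v) P ↔ StepwiseEff u P ∧ StepwiseEff v (mApply u P) := by
  induction u generalizing P with
  | nil => simp [StepwiseEff, mApply_nil]
  | cons a l ih => simp [StepwiseEff, ih, mApply_cons, and_assoc]

lemma isReverse_symm {τ τ' : S → S} (h : IsReverse τ τ') : IsReverse τ' τ := by
  intro P Q hPQ
  exact ((h Q P hPQ.symm).symm)

lemma isReverse_unique_left {a b c : S → S} (ha : IsReverse a c) (hb : IsReverse b c) :
    a = b := by
  funext P
  by_cases h : b P = P
  · rw [h]
    by_contra hne
    have h2 := (ha P (a P) (Ne.symm hne)).mp rfl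
    have h3 := (hb P (a P) (Ne.symm hne)).mpr h2
    exact hne (h3 ▸ h)
  · have h2 := (hb P (b P) (Ne.symm h)).mp rfl
    exact (ha P (b P) (Ne.symm h)).mpr h2

lemma isReverse_unique_right {a b c : S → S} (ha : IsReverse c a) (hb : IsReverse c b) :
    a = b :=
  isReverse_unique_left (isReverse_symm ha) (isReverse_symm hb)

lemma rev_step {a r : S → S} (h : IsReverse a r) {P : S} (hP : a P ≠ P) :
    r (a P) = P ∧ r (a P) ≠ a P := by
  have h1 := (h P (a P) (Ne.symm hP)).mp rfl
  refine ⟨h1, ?_⟩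
  rw [h1]
  exact Ne.symm hP

/-- every token of a medium has a reverse in T -/
lemma medium_rev_exists {T : Set (S → S)} (hM : IsMedium T) :
    ∀ τ ∈ T, ∃ τ', τ' ∈ T ∧ IsReverse τ τ' := by
  intro τ hτ
  obtain ⟨hTS, hMa, hMb⟩ := hM
  have hne : τ ≠ id := hTS.2.2 τ hτ
  have : ∃ P : S, τ P ≠ P := by
    by_contra h
    push_neg at h
    exact hne (funext h)
  obtain ⟨P, hP⟩ := this
  obtain ⟨m, hm, hmP⟩ := hMa (τ P) P hP
  have hmsg : IsMsg T (τ :: m) := by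
    intro x hx
    rcases List.mem_cons.mp hx with h | h
    · exact h ▸ hτ
    · exact hm.1 x h
  have hret : IsReturn (τ :: m) P := by
    constructor
    · exact ⟨hP, hm.2.2.1⟩
    · rw [mApply_cons, hmP]
  obtain ⟨σ, hσ1, hσ2, hσ3⟩ := hMb (τ :: m) P hmsg hret
  have hlen : 0 < (τ :: m).length := by simp
  set i0 : Fin (τ :: m).length := ⟨0, hlen⟩ with hi0
  have h3 := hσ3 i0
  have hne0 : (σ i0).1 ≠ 0 := by
    intro h
    exact hσ1 i0 (Fin.ext h)
  have hget0 : (τ :: m).get i0 = τ := rfl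
  have hmem : (τ :: m).get (σ i0) ∈ τ :: m := by
    have := List.get_mem (τ :: m) (σ i0)
    exact this
  rw [hget0] at h3
  exact ⟨(τ :: m).get (σ i0), hmsg _ hmem, h3⟩

lemma revMsg_spec (ρ : (S → S) → (S → S)) :
    ∀ (m : List (S → S)) (P : S), (∀ x ∈ m, IsReverse x (ρ x)) → StepwiseEff m P →
    StepwiseEff ((m.map ρ).reverse) (mApply m P) ∧
      mApply ((m.map ρ).reverse) (mApply m P) = P := by
  intro m
  induction m with
  | nil => intro P _ _; exact ⟨trivial, rfl⟩
  | cons a l ih =>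
    intro P hρ hse
    obtain ⟨ha, hl⟩ := hse
    have hρa : IsReverse a (ρ a) := hρ a List.mem_cons_self
    have hρl : ∀ x ∈ l, IsReverse x (ρ x) := fun x hx => hρ x (List.mem_cons_of_mem a hx)
    obtain ⟨ih1, ih2⟩ := ih (a P) hρl hl
    have hrw : ((a :: l).map ρ).reverse = (l.map ρ).reverse ++ [ρ a] := by
      simp
    have happ : mApply (a :: l) P = mApply l (a P) := rfl
    rw [hrw, happ]
    constructor
    · rw [stepwiseEff_append]
      refine ⟨ih1, ?_⟩
      rw [ih2]
      exact ⟨(rev_step hρa ha).2, trivial⟩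
    · rw [mApply_append, ih2]
      show mApply [ρ a] (a P) = P
      show ρ a (a P) = P
      exact (rev_step hρa ha).1

lemma getElem_idx_congr {α : Type*} {l : List α} {i j : ℕ} (h : i = j) (hi : i < l.length) :
    l[i] = l[j]'(h ▸ hi) := by subst h; rfl

lemma invol_card_eq {n : ℕ} (σ : Equiv.Perm (Fin n)) (A B : Finset (Fin n))
    (hAB : ∀ i ∈ A, σ i ∈ B) (hBA : ∀ i ∈ B, σ i ∈ A) : A.card = B.card :=
  le_antisymm (Finset.card_le_card_of_injOn σ hAB (σ.injective.injOn))
    (Finset.card_le_card_of_injOn σ hBA (σ.injective.injOn))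

section Core

variable {τ μ μ' : S → S} {ρ : (S → S) → (S → S)} {q w : List (S → S)}

lemma core (hμ' : IsReverse μ μ')
    (hρw : ∀ x ∈ w, IsReverse x (ρ x))
    (hqc : Consistent q) (hqn : q.Nodup)
    (hwc : Consistent w) (hwn : w.Nodup)
    (hvac : Vacuous (τ :: (q ++ μ' :: (w.map ρ).reverse))) :
    (τ = μ → msgContent q = msgContent w ∧ q.length = w.length) ∧
    (msgContent q = msgContent w → τ = μ) := by
  classical
  set wt : List (S → S) := (w.map ρ).reverse with hwt
  set r : List (S → S) := τ :: (q ++ μ' :: wt) with hr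
  have hwtb : wt.length = w.length := by simp [hwt]
  have hlen : r.length = q.length + w.length + 2 := by
    simp [hr, hwtb]
    omega
  obtain ⟨σ, hσne, hσinv, hσpair⟩ := hvac
  -- index→token lemmas
  have htok0 : ∀ (i : Fin r.length), i.1 = 0 → r.get i = τ := by
    rintro ⟨v, hv⟩ h
    subst h
    rfl
  have htokq : ∀ (k : ℕ) (hk : k < q.length) (h : k + 1 < r.length),
      r[k+1] = q[k]'hk := by
    intro k hk h
    show (τ :: (q ++ μ' :: wt))[k+1] = _
    rw [List.getElem_cons_succ]
    exact List.getElem_append_left hk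
  have htokm : ∀ (h : q.length + 1 < r.length), r[q.length+1] = μ' := by
    intro h
    show (τ :: (q ++ μ' :: wt))[q.length+1] = _
    rw [List.getElem_cons_succ, List.getElem_append_right (by omega)]
    simp
  have htokw : ∀ (k : ℕ) (hk : k < wt.length) (h : (q.length+1+k) + 1 < r.length),
      r[(q.length+1+k)+1] = wt[k]'hk := by
    intro k hk h
    show (τ :: (q ++ μ' :: wt))[(q.length+1+k)+1] = _
    rw [List.getElem_cons_succ, List.getElem_append_right (by omega)]
    have h2 : q.length + 1 + k - q.length = k + 1 := by omega
    rw [getElem_idx_congr h2, List.getElem_cons_succ]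
  -- region-token lemmas in Fin form
  have htokA : ∀ (i : Fin r.length) (h1 : 1 ≤ i.1) (h2 : i.1 ≤ q.length),
      r.get i = q[i.1 - 1]'(by omega) := by
    rintro ⟨v, hv⟩ h1 h2
    have h1' : 1 ≤ v := h1
    have h2' : v ≤ q.length := h2
    simp only [List.get_eq_getElem]
    rw [getElem_idx_congr (show v = (v-1)+1 by omega) hv]
    exact htokq (v-1) (by omega) (by omega)
  have htokB : ∀ (i : Fin r.length) (h1 : q.length + 2 ≤ i.1),
      r.get i = wt[i.1 - (q.length+2)]'(by omega) := by
    rintro ⟨v, hv⟩ h1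
    have h1' : q.length + 2 ≤ v := h1
    simp only [List.get_eq_getElem]
    rw [getElem_idx_congr (show v = (q.length + 1 + (v - (q.length+2))) + 1 by omega) hv]
    exact htokw (v - (q.length+2)) (by omega) (by omega)
  have htokM : ∀ (i : Fin r.length), i.1 = q.length + 1 → r.get i = μ' := by
    rintro ⟨v, hv⟩ h
    simp only [List.get_eq_getElem]
    rw [getElem_idx_congr h hv]
    exact htokm (by omega)
  -- membership facts
  have hqmem : ∀ (i : Fin r.length) (h1 : 1 ≤ i.1) (h2 : i.1 ≤ q.length),
      r.get i ∈ q := by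
    intro i h1 h2
    rw [htokA i h1 h2]
    exact List.getElem_mem _
  have hwtmemB : ∀ (i : Fin r.length) (h1 : q.length + 2 ≤ i.1),
      ∃ y ∈ w, r.get i = ρ y := by
    intro i h1
    rw [htokB i h1]
    have hmem : wt[i.1 - (q.length+2)]'(by omega) ∈ wt := List.getElem_mem _
    obtain ⟨y, hy, hyeq⟩ := List.mem_map.mp (List.mem_reverse.mp hmem)
    exact ⟨y, hy, hyeq.symm⟩
  have hidxQ : ∀ x ∈ q, ∃ i : Fin r.length, 1 ≤ i.1 ∧ i.1 ≤ q.length ∧ r.get i = x := by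
    intro x hx
    obtain ⟨k, hk, hkx⟩ := List.getElem_of_mem hx
    refine ⟨⟨k+1, by omega⟩, by simp, by simp; omega, ?_⟩
    rw [htokA ⟨k+1, by omega⟩ (by simp) (by simp; omega)]
    simp only [Nat.add_sub_cancel]
    exact hkx
  have hidxW : ∀ y ∈ w, ∃ i : Fin r.length, q.length + 2 ≤ i.1 ∧ r.get i = ρ y := by
    intro y hy
    have hmem : ρ y ∈ wt := by
      rw [hwt, List.mem_reverse]
      exact List.mem_map_of_mem (f := ρ) hy
    obtain ⟨k, hk, hkx⟩ := List.getElem_of_mem hmem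
    have hkb : k < w.length := by omega
    refine ⟨⟨q.length+2+k, by omega⟩, by simp, ?_⟩
    rw [htokB ⟨q.length+2+k, by omega⟩ (by simp)]
    have h2 : q.length+2+k - (q.length+2) = k := by omega
    rw [getElem_idx_congr h2]
    exact hkx
  -- uniqueness helpers
  have hρinj : ∀ x ∈ w, ∀ y ∈ w, ρ x = ρ y → x = y := by
    intro x hx y hy hxy
    exact isReverse_unique_left (hxy ▸ hρw x hx) (hρw y hy)
  have hwtcons : ∀ u ∈ w, ∀ v ∈ w, ¬ IsReverse (ρ u) (ρ v) := by
    intro u hu v hv h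
    have h1 : ρ v = u := isReverse_unique_left (isReverse_symm h) (hρw u hu)
    exact hwc v hv u hu (h1 ▸ hρw v hv)
  -- special indices
  have hi0lt : 0 < r.length := by omega
  have hiMlt : q.length + 1 < r.length := by omega
  set i0 : Fin r.length := ⟨0, hi0lt⟩ with hi0
  set iM : Fin r.length := ⟨q.length + 1, hiMlt⟩ with hiM
  have ht0 : r.get i0 = τ := htok0 i0 rfl
  have htM : r.get iM = μ' := htokM iM rfl
  have hpe : IsReverse τ (r.get (σ i0)) := ht0 ▸ hσpair i0
  have hpf : IsReverse μ' (r.get (σ iM)) := htM ▸ hσpair iM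
  -- transition facts
  have hAnotA : ∀ (i : Fin r.length) (h1 : 1 ≤ i.1) (h2 : i.1 ≤ q.length),
      ¬ (1 ≤ (σ i).1 ∧ (σ i).1 ≤ q.length) := by
    rintro i h1 h2 ⟨h3, h4⟩
    exact hqc _ (hqmem i h1 h2) _ (hqmem (σ i) h3 h4) (hσpair i)
  have hBnotB : ∀ (i : Fin r.length) (h1 : q.length + 2 ≤ i.1),
      ¬ (q.length + 2 ≤ (σ i).1) := by
    intro i h1 h2
    obtain ⟨u, hu, huq⟩ := hwtmemB i h1
    obtain ⟨v, hv, hvq⟩ := hwtmemB (σ i) h2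
    exact hwtcons u hu v hv (huq ▸ hvq ▸ hσpair i)
  have hAstep : ∀ (i : Fin r.length) (h1 : 1 ≤ i.1) (h2 : i.1 ≤ q.length),
      σ i = i0 ∨ σ i = iM ∨ q.length + 2 ≤ (σ i).1 := by
    intro i h1 h2
    have hb := (σ i).2
    have hnA := hAnotA i h1 h2
    rcases (show (σ i).1 = 0 ∨ (1 ≤ (σ i).1 ∧ (σ i).1 ≤ q.length) ∨ (σ i).1 = q.length + 1
        ∨ q.length + 2 ≤ (σ i).1 by omega) with h | h | h | h
    · exact Or.inl (Fin.ext h)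
    · exact absurd h hnA
    · exact Or.inr (Or.inl (Fin.ext h))
    · exact Or.inr (Or.inr h)
  have hBstep : ∀ (i : Fin r.length) (h1 : q.length + 2 ≤ i.1),
      σ i = i0 ∨ σ i = iM ∨ (1 ≤ (σ i).1 ∧ (σ i).1 ≤ q.length) := by
    intro i h1
    have hb := (σ i).2
    have hnB := hBnotB i h1
    rcases (show (σ i).1 = 0 ∨ (1 ≤ (σ i).1 ∧ (σ i).1 ≤ q.length) ∨ (σ i).1 = q.length + 1
        ∨ q.length + 2 ≤ (σ i).1 by omega) with h | h | h | h
    · exact Or.inl (Fin.ext h)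
    · exact Or.inr (Or.inr h)
    · exact Or.inr (Or.inl (Fin.ext h))
    · exact absurd h hnB
  -- matched-token facts
  have hM1 : ∀ (i : Fin r.length) (h1 : 1 ≤ i.1) (h2 : i.1 ≤ q.length)
      (h3 : q.length + 2 ≤ (σ i).1), r.get i ∈ w := by
    intro i h1 h2 h3
    obtain ⟨y, hy, hyeq⟩ := hwtmemB (σ i) h3
    have hpair := hyeq ▸ hσpair i
    have := isReverse_unique_left hpair (hρw y hy)
    exact this ▸ hy
  have hM2 : ∀ (i : Fin r.length) (h1 : q.length + 2 ≤ i.1)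
      (h2 : 1 ≤ (σ i).1) (h3 : (σ i).1 ≤ q.length) (y : S → S) (hy : y ∈ w)
      (heq : r.get i = ρ y), y ∈ q := by
    intro i h1 h2 h3 y hy heq
    have hpair := heq ▸ hσpair i
    have := isReverse_unique_left (isReverse_symm hpair) (hρw y hy)
    exact this ▸ hqmem (σ i) h2 h3

  -- Finsets of regions
  set A : Finset (Fin r.length) := Finset.univ.filter (fun i => 1 ≤ i.1 ∧ i.1 ≤ q.length) with hA
  set B : Finset (Fin r.length) := Finset.univ.filter (fun i => q.length + 2 ≤ i.1) with hB
  have hmemA : ∀ i : Fin r.length, i ∈ A ↔ (1 ≤ i.1 ∧ i.1 ≤ q.length) := by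
    intro i; simp [hA]
  have hmemB : ∀ i : Fin r.length, i ∈ B ↔ q.length + 2 ≤ i.1 := by
    intro i; simp [hB]
  have hAcard : A.card = q.length := by
    have himg : A = Finset.image
        (fun k : Fin q.length => (⟨k.1 + 1, by omega⟩ : Fin r.length)) Finset.univ := by
      ext i
      rw [hmemA i]
      simp only [Finset.mem_image, Finset.mem_univ, true_and]
      constructor
      · rintro ⟨h1, h2⟩
        exact ⟨⟨i.1 - 1, by omega⟩, Fin.ext (by simp; omega)⟩
      · rintro ⟨k, rfl⟩
        have hk := k.2
        simp only []
        omega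
    rw [himg, Finset.card_image_of_injective _ ?inj1, Finset.card_univ, Fintype.card_fin]
    case inj1 =>
      intro x y h
      have := congrArg Fin.val h
      simp only [] at this
      exact Fin.ext (by omega)
  have hBcard : B.card = w.length := by
    have himg : B = Finset.image
        (fun k : Fin w.length => (⟨q.length + 2 + k.1, by omega⟩ : Fin r.length)) Finset.univ := by
      ext i
      rw [hmemB i]
      simp only [Finset.mem_image, Finset.mem_univ, true_and]
      constructor
      · intro h1
        have hib := i.2
        exact ⟨⟨i.1 - (q.length + 2), by omega⟩, Fin.ext (by simp; omega)⟩
      · rintro ⟨k, rfl⟩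
        simp only []
        omega
    rw [himg, Finset.card_image_of_injective _ ?inj2, Finset.card_univ, Fintype.card_fin]
    case inj2 =>
      intro x y h
      have := congrArg Fin.val h
      simp only [] at this
      exact Fin.ext (by omega)
  -- more helpers
  have hσiv : ∀ i j : Fin r.length, σ i = j → σ j = i := by
    intro i j h
    rw [← h, hσinv]
  have hwtn : wt.Nodup := by
    rw [hwt, List.nodup_reverse]
    exact hwn.map_on (fun x hx y hy h => hρinj x hx y hy h)
  have hFμ : r.get (σ iM) = μ := isReverse_unique_left (isReverse_symm hpf) hμ'
  have h0ne : (σ i0).1 ≠ 0 := fun h => hσne i0 (Fin.ext h)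
  have h0b := (σ i0).2
  have hMne : (σ iM).1 ≠ q.length + 1 := fun h => hσne iM (Fin.ext h)
  have hMb := (σ iM).2
  have hi0M : i0 ≠ iM := by
    intro h
    have := congrArg Fin.val h
    simp [hi0, hiM] at this
  constructor
  · -- (ii) → (iii)
    intro hτμ
    have hFτ : r.get (σ iM) = τ := by rw [hFμ, ← hτμ]
    rcases (show (1 ≤ (σ i0).1 ∧ (σ i0).1 ≤ q.length) ∨ (σ i0).1 = q.length + 1
        ∨ q.length + 2 ≤ (σ i0).1 by omega) with hA0 | hM0 | hB0
    · -- σ i0 ∈ A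
      rcases (show (σ iM).1 = 0 ∨ (1 ≤ (σ iM).1 ∧ (σ iM).1 ≤ q.length)
          ∨ q.length + 2 ≤ (σ iM).1 by omega) with hMM | hAM | hBM
      · -- σ iM = i0, so σ i0 = iM : contradiction with region A
        have : σ i0 = iM := hσiv iM i0 (Fin.ext hMM)
        have := congrArg Fin.val this
        simp [hiM] at this
        omega
      · -- case 2 : both in A, contradiction
        exfalso
        have h1 : r.get (σ iM) ∈ q := hqmem (σ iM) hAM.1 hAM.2
        have h2 : r.get (σ i0) ∈ q := hqmem (σ i0) hA0.1 hA0.2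
        have h3 : IsReverse (r.get (σ iM)) (r.get (σ i0)) := by
          rw [hFτ]
          exact hpe
        exact hqc _ h1 _ h2 h3
      · -- case 3 : σ i0 ∈ A, σ iM ∈ B
        obtain ⟨z, hz, hzeq⟩ := hwtmemB (σ iM) hBM
        have hzτ : ρ z = τ := by rw [← hzeq, hFτ]
        have hez : r.get (σ i0) = z := by
          refine isReverse_unique_right hpe (isReverse_symm ?_)
          rw [← hzτ]
          exact hρw z hz
        constructor
        · -- contents
          ext x
          simp only [msgContent, Set.mem_setOf_eq]
          constructor
          · intro hx
            obtain ⟨i, h1, h2, hix⟩ := hidxQ x hx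
            by_cases hie : i = σ i0
            · rw [← hix, hie, hez]
              exact hz
            · rcases hAstep i h1 h2 with h | h | h
              · exact absurd (hσiv i i0 h) (fun e => hie e.symm)
              · have := hσiv i iM h
                have := congrArg Fin.val this
                omega
              · exact hix ▸ hM1 i h1 h2 h
          · intro hx
            obtain ⟨i, hBi, hiy⟩ := hidxW x hx
            by_cases hif : i = σ iM
            · have : ρ x = ρ z := by rw [← hiy, hif, hzeq]
              have hxz := hρinj x hx z hz this
              rw [hxz, ← hez]
              exact hqmem (σ i0) hA0.1 hA0.2
            · rcases hBstep i hBi with h | h | h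
              · have := congrArg Fin.val (hσiv i i0 h)
                omega
              · exact absurd (hσiv i iM h) (fun e => hif e.symm)
              · exact hM2 i hBi h.1 h.2 x hx hiy
        · -- lengths
          have heA : σ i0 ∈ A := (hmemA _).mpr hA0
          have hfB : σ iM ∈ B := (hmemB _).mpr hBM
          have hcard : (A.erase (σ i0)).card = (B.erase (σ iM)).card := by
            apply invol_card_eq σ
            · intro i hi
              obtain ⟨hie, hiA⟩ := Finset.mem_erase.mp hi
              obtain ⟨h1, h2⟩ := (hmemA i).mp hiA
              rcases hAstep i h1 h2 with h | h | h
              · exact absurd (hσiv i i0 h) (fun e => hie e.symm)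
              · have := congrArg Fin.val (hσiv i iM h)
                omega
              · refine Finset.mem_erase.mpr ⟨?_, (hmemB _).mpr h⟩
                intro e
                have := congrArg Fin.val (σ.injective e)
                simp only [hi0, hiM, Fin.val_zero] at this
                omega
            · intro i hi
              obtain ⟨hie, hiB⟩ := Finset.mem_erase.mp hi
              have h1 := (hmemB i).mp hiB
              rcases hBstep i h1 with h | h | h
              · have := congrArg Fin.val (hσiv i i0 h)
                omega
              · exact absurd (hσiv i iM h) (fun e => hie e.symm)
              · refine Finset.mem_erase.mpr ⟨?_, (hmemA _).mpr h⟩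
                intro e
                have := congrArg Fin.val (σ.injective e)
                simp only [hi0, hiM, Fin.val_zero] at this
                omega
          rw [Finset.card_erase_of_mem heA, Finset.card_erase_of_mem hfB,
            hAcard, hBcard] at hcard
          have hq1 : 0 < A.card := Finset.card_pos.mpr ⟨_, heA⟩
          have hw1 : 0 < B.card := Finset.card_pos.mpr ⟨_, hfB⟩
          rw [hAcard] at hq1
          rw [hBcard] at hw1
          omega
    · -- case 1 : σ i0 = iM
      have hm1 : σ i0 = iM := Fin.ext hM0
      have hm2 : σ iM = i0 := hσiv i0 iM hm1
      have hABf : ∀ (i : Fin r.length) (h1 : 1 ≤ i.1) (h2 : i.1 ≤ q.length),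
          q.length + 2 ≤ (σ i).1 := by
        intro i h1 h2
        rcases hAstep i h1 h2 with h | h | h
        · have := congrArg Fin.val ((hσiv i i0 h).symm.trans hm1)
          simp [hiM] at this
          omega
        · have := congrArg Fin.val ((hσiv i iM h).symm.trans hm2)
          simp only [hi0, Fin.val_mk] at this
          omega
        · exact h
      have hBAf : ∀ (i : Fin r.length) (h1 : q.length + 2 ≤ i.1),
          1 ≤ (σ i).1 ∧ (σ i).1 ≤ q.length := by
        intro i h1
        rcases hBstep i h1 with h | h | h
        · have := congrArg Fin.val ((hσiv i i0 h).symm.trans hm1)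
          simp [hiM] at this
          omega
        · have := congrArg Fin.val ((hσiv i iM h).symm.trans hm2)
          simp only [hi0, Fin.val_mk] at this
          omega
        · exact h
      constructor
      · ext x
        simp only [msgContent, Set.mem_setOf_eq]
        constructor
        · intro hx
          obtain ⟨i, h1, h2, hix⟩ := hidxQ x hx
          exact hix ▸ hM1 i h1 h2 (hABf i h1 h2)
        · intro hx
          obtain ⟨i, hBi, hiy⟩ := hidxW x hx
          exact hM2 i hBi (hBAf i hBi).1 (hBAf i hBi).2 x hx hiy
      · have := invol_card_eq σ A B
          (fun i hi => (hmemB _).mpr (hABf i ((hmemA i).mp hi).1 ((hmemA i).mp hi).2))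
          (fun i hi => (hmemA _).mpr (hBAf i ((hmemB i).mp hi)))
        rw [hAcard, hBcard] at this
        exact this
    · -- σ i0 ∈ B
      rcases (show (σ iM).1 = 0 ∨ (1 ≤ (σ iM).1 ∧ (σ iM).1 ≤ q.length)
          ∨ q.length + 2 ≤ (σ iM).1 by omega) with hMM | hAM | hBM
      · -- σ iM = i0 → σ i0 = iM : contradiction with region B
        have : σ i0 = iM := hσiv iM i0 (Fin.ext hMM)
        have := congrArg Fin.val this
        simp [hiM] at this
        omega
      · -- case 4 : σ i0 ∈ B, σ iM ∈ A
        obtain ⟨y, hy, hyeq⟩ := hwtmemB (σ i0) hB0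
        have hτy : τ = y := isReverse_unique_left (hyeq ▸ hpe) (hρw y hy)
        constructor
        · ext x
          simp only [msgContent, Set.mem_setOf_eq]
          constructor
          · intro hx
            obtain ⟨i, h1, h2, hix⟩ := hidxQ x hx
            by_cases hif : i = σ iM
            · rw [← hix, hif, hFτ, hτy]
              exact hy
            · rcases hAstep i h1 h2 with h | h | h
              · have := congrArg Fin.val (hσiv i i0 h)
                omega
              · exact absurd (hσiv i iM h) (fun e => hif e.symm)
              · exact hix ▸ hM1 i h1 h2 h
          · intro hx
            obtain ⟨i, hBi, hiy⟩ := hidxW x hx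
            by_cases hie : i = σ i0
            · have : ρ x = ρ y := by rw [← hiy, hie, hyeq]
              have hxy := hρinj x hx y hy this
              rw [hxy, ← hτy, ← hFτ]
              exact hqmem (σ iM) hAM.1 hAM.2
            · rcases hBstep i hBi with h | h | h
              · exact absurd (hσiv i i0 h) (fun e => hie e.symm)
              · have := congrArg Fin.val (hσiv i iM h)
                omega
              · exact hM2 i hBi h.1 h.2 x hx hiy
        · have heB : σ i0 ∈ B := (hmemB _).mpr hB0
          have hfA : σ iM ∈ A := (hmemA _).mpr hAM
          have hcard : (A.erase (σ iM)).card = (B.erase (σ i0)).card := by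
            apply invol_card_eq σ
            · intro i hi
              obtain ⟨hie, hiA⟩ := Finset.mem_erase.mp hi
              obtain ⟨h1, h2⟩ := (hmemA i).mp hiA
              rcases hAstep i h1 h2 with h | h | h
              · have := congrArg Fin.val (hσiv i i0 h)
                omega
              · exact absurd (hσiv i iM h) (fun e => hie e.symm)
              · refine Finset.mem_erase.mpr ⟨?_, (hmemB _).mpr h⟩
                intro e
                have := congrArg Fin.val (σ.injective e)
                simp only [hi0, hiM, Fin.val_zero] at this
                omega
            · intro i hi
              obtain ⟨hie, hiB⟩ := Finset.mem_erase.mp hi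
              have h1 := (hmemB i).mp hiB
              rcases hBstep i h1 with h | h | h
              · exact absurd (hσiv i i0 h) (fun e => hie e.symm)
              · have := congrArg Fin.val (hσiv i iM h)
                omega
              · refine Finset.mem_erase.mpr ⟨?_, (hmemA _).mpr h⟩
                intro e
                have := congrArg Fin.val (σ.injective e)
                simp only [hi0, hiM, Fin.val_zero] at this
                omega
          rw [Finset.card_erase_of_mem hfA, Finset.card_erase_of_mem heB,
            hAcard, hBcard] at hcard
          have hq1 : 0 < A.card := Finset.card_pos.mpr ⟨_, hfA⟩
          have hw1 : 0 < B.card := Finset.card_pos.mpr ⟨_, heB⟩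
          rw [hAcard] at hq1
          rw [hBcard] at hw1
          omega
      · -- case 5 : both in B, contradiction
        obtain ⟨y, hy, hyeq⟩ := hwtmemB (σ i0) hB0
        obtain ⟨z, hz, hzeq⟩ := hwtmemB (σ iM) hBM
        have hτy : τ = y := isReverse_unique_left (hyeq ▸ hpe) (hρw y hy)
        have hzτ : ρ z = τ := by rw [← hzeq, hFτ]
        have : IsReverse z y := by
          have := hρw z hz
          rw [hzτ, hτy] at this
          exact this
        exact absurd this (hwc z hz y hy)
  · -- (iii) → (ii)
    intro hC
    have hqw : ∀ x, x ∈ q → x ∈ w := fun x hx => (Set.ext_iff.mp hC x).mp hx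
    have hwq : ∀ x, x ∈ w → x ∈ q := fun x hx => (Set.ext_iff.mp hC x).mpr hx
    rcases (show (1 ≤ (σ i0).1 ∧ (σ i0).1 ≤ q.length) ∨ (σ i0).1 = q.length + 1
        ∨ q.length + 2 ≤ (σ i0).1 by omega) with hA0 | hM0 | hB0
    · -- σ i0 ∈ A
      have hqe : r.get (σ i0) ∈ q := hqmem (σ i0) hA0.1 hA0.2
      have hwe : r.get (σ i0) ∈ w := hqw _ hqe
      have hρe : ρ (r.get (σ i0)) = τ :=
        isReverse_unique_right (hρw _ hwe) (isReverse_symm hpe)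
      obtain ⟨p, hpB, hpeq⟩ := hidxW _ hwe
      have hpτ : r.get p = τ := by rw [hpeq, hρe]
      rcases hBstep p hpB with h | h | h
      · have := congrArg Fin.val (hσiv p i0 h)
        omega
      · have : IsReverse τ μ' := by
          have hp := hσpair p
          rw [hpτ, h, htM] at hp
          exact hp
        exact isReverse_unique_left this hμ'
      · exfalso
        have hp := hσpair p
        rw [hpτ] at hp
        have heq : r.get (σ p) = r.get (σ i0) := isReverse_unique_right hp hpe
        rw [htokA (σ p) h.1 h.2, htokA (σ i0) hA0.1 hA0.2] at heq
        have := (List.Nodup.getElem_inj_iff hqn).mp heq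
        have hvp : σ p = σ i0 := Fin.ext (by omega)
        have := congrArg Fin.val (σ.injective hvp)
        simp only [hi0, Fin.val_mk] at this
        omega
    · -- σ i0 = iM : direct
      have hm1 : σ i0 = iM := Fin.ext hM0
      have : IsReverse τ μ' := by
        rw [hm1, htM] at hpe
        exact hpe
      exact isReverse_unique_left this hμ'
    · -- σ i0 ∈ B
      obtain ⟨y, hy, hyeq⟩ := hwtmemB (σ i0) hB0
      have hτy : τ = y := isReverse_unique_left (hyeq ▸ hpe) (hρw y hy)
      have hτq : τ ∈ q := hwq τ (hτy ▸ hy)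
      obtain ⟨p, h1, h2, hpeq⟩ := hidxQ τ hτq
      rcases hAstep p h1 h2 with h | h | h
      · have := congrArg Fin.val (hσiv p i0 h)
        omega
      · have : IsReverse τ μ' := by
          have hp := hσpair p
          rw [hpeq, h, htM] at hp
          exact hp
        exact isReverse_unique_left this hμ'
      · exfalso
        have hp := hσpair p
        rw [hpeq] at hp
        have heq : r.get (σ p) = r.get (σ i0) := isReverse_unique_right hp hpe
        rw [htokB (σ p) h, htokB (σ i0) hB0] at heq
        have := (List.Nodup.getElem_inj_iff hwtn).mp heq
        have hvp : σ p = σ i0 := Fin.ext (by omega)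
        have := congrArg Fin.val (σ.injective hvp)
        simp only [hi0, Fin.val_mk] at this
        omega

end Core

/-- Theorem 5, (ii) ⇔ (iii): `τ = μ` iff `C(q) = C(w)` and `ℓ(q) = ℓ(w)`. -/
theorem stmt8 {S' : Type*} {T : Set (S' → S')} (hM : IsMedium T)
    (St N Q W : S') (τ μ : S' → S') (hτ : τ ∈ T) (hμ : μ ∈ T)
    (hd1 : St ≠ N) (hd2 : St ≠ Q) (hd3 : St ≠ W) (hd4 : N ≠ Q) (hd5 : N ≠ W)
    (hd6 : Q ≠ W)
    (hNS : τ N = St) (hWQ : μ W = Q)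
    (q q' w w' : List (S' → S'))
    (hq : Concise T q St) (hq' : Concise T q' N)
    (hw : Concise T w N) (hw' : Concise T w' St)
    (hqQ : mApply q St = Q) (hq'Q : mApply q' N = Q)
    (hwW : mApply w N = W) (hw'W : mApply w' St = W) :
    τ = μ ↔ (msgContent q = msgContent w ∧ q.length = w.length) := by
  classical
  have hex : ∀ x : S' → S', ∃ y, x ∈ T → (y ∈ T ∧ IsReverse x y) := by
    intro x
    by_cases h : x ∈ T
    · obtain ⟨y, hy1, hy2⟩ := medium_rev_exists hM x h
      exact ⟨y, fun _ => ⟨hy1, hy2⟩⟩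
    · exact ⟨x, fun h' => absurd h' h⟩
  choose ρ hρ using hex
  set μ' := ρ μ with hμ'def
  have hμ' : IsReverse μ μ' := (hρ μ hμ).2
  have hμ'T : μ' ∈ T := (hρ μ hμ).1
  have hρw : ∀ x ∈ w, IsReverse x (ρ x) := fun x hx => (hρ x (hw.1 x hx)).2
  set wt : List (S' → S') := (w.map ρ).reverse with hwtdef
  set r : List (S' → S') := τ :: (q ++ μ' :: wt) with hrdef
  -- stepwise effectiveness and return
  have hμW : μ W ≠ W := by rw [hWQ]; exact hd6
  have hμ'Q : μ' Q = W := by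
    have := (rev_step hμ' hμW).1
    rwa [hWQ] at this
  have hμ'QQ : μ' Q ≠ Q := by
    rw [hμ'Q]; exact fun e => hd6 e.symm
  have hwtspec := revMsg_spec ρ w N hρw hw.2.2.1
  rw [hwW] at hwtspec
  have hτN : τ N ≠ N := by rw [hNS]; exact hd1
  have hret : IsReturn r N := by
    constructor
    · refine ⟨hτN, ?_⟩
      rw [hNS, stepwiseEff_append, hqQ]
      exact ⟨hq.2.2.1, hμ'QQ, by rw [hμ'Q]; exact hwtspec.1⟩
    · show mApply (q ++ μ' :: wt) (τ N) = N
      rw [hNS, mApply_append, hqQ]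
      show mApply wt (μ' Q) = N
      rw [hμ'Q]
      exact hwtspec.2
  have hmsg : IsMsg T r := by
    intro x hx
    rcases List.mem_cons.mp hx with h | h
    · exact h ▸ hτ
    rcases List.mem_append.mp h with h | h
    · exact hq.1 x h
    rcases List.mem_cons.mp h with h | h
    · exact h ▸ hμ'T
    · obtain ⟨y, hy, hyeq⟩ := List.mem_map.mp (List.mem_reverse.mp h)
      exact hyeq ▸ (hρ y (hw.1 y hy)).1
  have hvac : Vacuous r := hM.2.2 r N hmsg hret
  have hcore := core hμ' hρw hq.2.1 hq.2.2.2 hw.2.1 hw.2.2.2 hvac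
  constructor
  · exact hcore.1
  · intro ⟨h1, _⟩
    exact hcore.2 h1
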